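/- With the above notation, $A^{(m)} = \sum_{p=0}^{\lfloor m/2 \rfloor} (-1)^p\, T_p^{(m)}$ holds in $L$, where for $0 \le p \le \lfloor m/2 \rfloor$ one sets $\mathcal{T}_p^{(m)} = \{\sigma \subset \mathbb{Z}/m\mathbb{Z} : |\sigma| = p \text{ and } j \neq j'+1 \text{ for all } j, j' \in \sigma\}$, $\overline{\sigma} = \{j \in \mathbb{Z}/m\mathbb{Z} : j \notin \sigma \text{ and } j-1 \notin \sigma\}$, and $T_p^{(m)} = \sum_{\sigma \in \mathcal{T}_p^{(m)}} \prod_{j \in \sigma} F_j \prod_{j' \in \overline{\sigma}} z_{j'}$. -/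

import Mathlib

set_option linter.unusedSectionVars false
set_option linter.unusedVariables false
set_option maxHeartbeats 1000000

/- Setting: `Lm K m` is the field of fractions of the (Laurent) polynomial ring over a field
`K` in commuting variables `yv n` indexed by `n : ZMod m`, with fixed scalars `F n : K`. -/

noncomputable section

variable (K : Type) [Field K] (m : ℕ) [NeZero m]

/-- The ambient field `L`. -/
abbrev Lm := FractionRing (MvPolynomial (ZMod m) K)

/-- The variable `y_n`. -/
def yv (n : ZMod m) : Lm K m :=
  algebraMap (MvPolynomial (ZMod m) K) (Lm K m) (MvPolynomial.X n)

variable (F : ZMod m → K)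

/-- The scalar `F_n` viewed inside `L`. -/
def Fc (n : ZMod m) : Lm K m := algebraMap K (Lm K m) (F n)

/-- `X_n = F_n / (y_n y_{n+1})`. -/
def Xv (n : ZMod m) : Lm K m := Fc K m F n / (yv K m n * yv K m (n + 1))

/-- `P_n = 1 + ∑_{k=0}^{m-2} X_n X_{n-1} ⋯ X_{n-k}`. -/
def Pv (n : ZMod m) : Lm K m :=
  1 + ∑ k ∈ Finset.range (m - 1), ∏ j ∈ Finset.range (k + 1), Xv K m F (n - (j : ZMod m))

/-- `z_n = y_n (1 + X_n)`. -/
def zv (n : ZMod m) : Lm K m := yv K m n * (1 + Xv K m F n)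

/-- `𝐲 = ∏_n y_n`. -/
def boldy : Lm K m := ∏ n : ZMod m, yv K m n

/-- `𝐅 = ∏_n F_n` (viewed in `L`). -/
def boldF : Lm K m := ∏ n : ZMod m, Fc K m F n

/-- `δ = 𝐲 - 𝐅/𝐲`. -/
def deltav : Lm K m := boldy K m - boldF K m F / boldy K m
/-- `C^{(1)} = 1`, `C^{(2)} = z_2`, `C^{(k)} = z_k C^{(k-1)} - F_{k-1} C^{(k-2)}` (indices mod `m`). -/
def Cv : ℕ → Lm K m
  | 0 => 1
  | 1 => 1
  | 2 => zv K m F ((2 : ℕ) : ZMod m)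
  | (k + 3) => zv K m F ((k + 3 : ℕ) : ZMod m) * Cv (k + 2)
      - Fc K m F ((k + 2 : ℕ) : ZMod m) * Cv (k + 1)

/-- The shifted sequence `C_+^{(1)} = 1`, `C_+^{(2)} = z_3`,
`C_+^{(k)} = z_{k+1} C_+^{(k-1)} - F_k C_+^{(k-2)}` (indices mod `m`). -/
def Cpv : ℕ → Lm K m
  | 0 => 1
  | 1 => 1
  | 2 => zv K m F ((3 : ℕ) : ZMod m)
  | (k + 3) => zv K m F ((k + 4 : ℕ) : ZMod m) * Cpv (k + 2)
      - Fc K m F ((k + 3 : ℕ) : ZMod m) * Cpv (k + 1)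

/-- `A^{(m)} = z_1 C^{(m)} - F_m C^{(m-1)} - F_1 C_+^{(m-1)}`. -/
def Av : Lm K m :=
  zv K m F ((1 : ℕ) : ZMod m) * Cv K m F m - Fc K m F ((m : ℕ) : ZMod m) * Cv K m F (m - 1)
    - Fc K m F ((1 : ℕ) : ZMod m) * Cpv K m F (m - 1)

/-- The collection `𝒯_p^{(m)}` of subsets `σ ⊆ ℤ/mℤ` with `|σ| = p` containing no two
"consecutive" elements (`j ≠ j' + 1` for all `j, j' ∈ σ`). -/
def Tsets (p : ℕ) : Finset (Finset (ZMod m)) :=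
  Finset.univ.powerset.filter fun σ => σ.card = p ∧ ∀ j ∈ σ, ∀ j' ∈ σ, j ≠ j' + 1

/-- `T_p^{(m)} = ∑_{σ ∈ 𝒯_p^{(m)}} ∏_{j ∈ σ} F_j ∏_{j' ∈ σ̄} z_{j'}` where
`σ̄ = {j : j ∉ σ, j - 1 ∉ σ}`. -/
def Tv (p : ℕ) : Lm K m :=
  ∑ σ ∈ Tsets m p,
    (∏ j ∈ σ, Fc K m F j) *
      ∏ j' ∈ Finset.univ.filter (fun j => j ∉ σ ∧ j - 1 ∉ σ), zv K m F j'

/-! ### Auxiliary machinery for the proof -/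

namespace S19

def Fn (i : ℕ) : Lm K m := Fc K m F (i : ZMod m)
def zn (i : ℕ) : Lm K m := zv K m F (i : ZMod m)

/-- path continuant with vertices `a, a+1, ..., a+n-1`. -/
def Dv (a : ℕ) : ℕ → Lm K m
  | 0 => 1
  | 1 => zn K m F a
  | (n + 2) => zn K m F (a + n + 1) * Dv a (n + 1) - Fn K m F (a + n) * Dv a n

/-- independent subsets of `[a, b)` (no two consecutive naturals). -/
def Esets (a b : ℕ) : Finset (Finset ℕ) :=
  (Finset.Ico a b).powerset.filter (fun σ => ∀ j ∈ σ, j + 1 ∉ σ)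

lemma mem_Esets {a b : ℕ} {σ : Finset ℕ} :
    σ ∈ Esets a b ↔ (∀ j ∈ σ, a ≤ j ∧ j < b) ∧ ∀ j ∈ σ, j + 1 ∉ σ := by
  simp [Esets, Finset.subset_iff, Finset.mem_Ico, forall_and]

/-- weight of an independent set, vertices ranging over `[lo, hi)`. -/
def w (σ : Finset ℕ) (lo hi : ℕ) : Lm K m :=
  (-1 : Lm K m) ^ σ.card * (∏ i ∈ σ, Fn K m F i) *
    ∏ j ∈ Finset.Ico lo hi, (if j ∉ σ ∧ j - 1 ∉ σ then zn K m F j else 1)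

lemma Esets_split (a k : ℕ) :
    Esets a (a + k + 2)
      = Esets a (a + k + 1) ∪ (Esets a (a + k)).image (insert (a + k + 1)) := by
  ext σ
  simp only [Finset.mem_union, Finset.mem_image, mem_Esets]
  constructor
  · rintro ⟨hsub, hind⟩
    by_cases h : a + k + 1 ∈ σ
    · right
      refine ⟨σ.erase (a + k + 1), ⟨⟨?_, ?_⟩, Finset.insert_erase h⟩⟩
      · intro j hj
        have hj2 : j ∈ σ := Finset.mem_of_mem_erase hj
        have hne : j ≠ a + k + 1 := Finset.ne_of_mem_erase hj
        have hb := hsub j hj2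
        have hne2 : j ≠ a + k := by
          intro hjeq
          exact hind j hj2 (by rw [hjeq]; exact h)
        omega
      · intro j hj
        exact fun hc => hind j (Finset.mem_of_mem_erase hj) (Finset.mem_of_mem_erase hc)
    · left
      refine ⟨fun j hj => ?_, hind⟩
      have h1 := hsub j hj
      have h2 : j ≠ a + k + 1 := fun hh => h (hh ▸ hj)
      omega
  · rintro (⟨hsub, hind⟩ | ⟨τ, ⟨hsub, hind⟩, rfl⟩)
    · exact ⟨fun j hj => by have := hsub j hj; omega, hind⟩
    · constructor
      · intro j hj
        rcases Finset.mem_insert.mp hj with rfl | hj'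
        · omega
        · have := hsub j hj'; omega
      · intro j hj
        rcases Finset.mem_insert.mp hj with rfl | hj'
        · intro hc
          rcases Finset.mem_insert.mp hc with h1 | h2
          · omega
          · have := hsub _ h2; omega
        · intro hc
          rcases Finset.mem_insert.mp hc with h1 | h2
          · have := hsub j hj'; omega
          · exact hind j hj' h2

lemma sum_split (f : Finset ℕ → Lm K m) (a k : ℕ) :
    ∑ σ ∈ Esets a (a + k + 2), f σ
      = ∑ σ ∈ Esets a (a + k + 1), f σ
        + ∑ σ ∈ Esets a (a + k), f (insert (a + k + 1) σ) := by
  rw [Esets_split, Finset.sum_union, Finset.sum_image]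
  · intro x hx y hy hxy
    have hx' : a + k + 1 ∉ x := fun hc => by
      have := (mem_Esets.mp hx).1 _ hc; omega
    have hy' : a + k + 1 ∉ y := fun hc => by
      have := (mem_Esets.mp hy).1 _ hc; omega
    rw [← Finset.erase_insert hx', ← Finset.erase_insert hy', hxy]
  · rw [Finset.disjoint_right]
    rintro σ hσ hσ'
    simp only [Finset.mem_image] at hσ
    obtain ⟨τ, _, rfl⟩ := hσ
    have := (mem_Esets.mp hσ').1 _ (Finset.mem_insert_self _ _)
    omega

lemma Esets_of_le {a b : ℕ} (h : b ≤ a) : Esets a b = {∅} := by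
  ext σ
  simp only [mem_Esets, Finset.mem_singleton]
  constructor
  · rintro ⟨h1, -⟩
    by_contra hne
    obtain ⟨j, hj⟩ := Finset.nonempty_iff_ne_empty.mpr hne
    have := h1 j hj; omega
  · rintro rfl; simp

lemma w_top (σ : Finset ℕ) (a b : ℕ) (hab : a ≤ b + 1) (hσ : ∀ j ∈ σ, j < b) :
    w K m F σ a (b + 2) = zn K m F (b + 1) * w K m F σ a (b + 1) := by
  unfold w
  rw [Finset.prod_Ico_succ_top hab]
  have h1 : b + 1 ∉ σ := fun hc => by have := hσ _ hc; omega
  have h2 : b + 1 - 1 ∉ σ := fun hc => by have := hσ _ hc; omega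
  rw [if_pos ⟨h1, h2⟩]
  ring

lemma w_insert (σ : Finset ℕ) (a b : ℕ) (hab : a ≤ b) (hσ : ∀ j ∈ σ, j + 1 < b) :
    w K m F (insert b σ) a (b + 2) = - (Fn K m F b * w K m F σ a b) := by
  have hb : b ∉ σ := fun hc => by have := hσ _ hc; omega
  unfold w
  rw [Finset.card_insert_of_notMem hb, Finset.prod_insert hb]
  rw [Finset.prod_Ico_succ_top (by omega : a ≤ b + 1),
    Finset.prod_Ico_succ_top (by omega : a ≤ b)]
  have e1 : (if b + 1 ∉ insert b σ ∧ b + 1 - 1 ∉ insert b σ then zn K m F (b+1) else 1) = 1 := by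
    rw [if_neg]; rintro ⟨-, hc⟩; exact hc (by simp)
  have e2 : (if b ∉ insert b σ ∧ b - 1 ∉ insert b σ then zn K m F b else 1) = 1 := by
    rw [if_neg]; rintro ⟨hc, -⟩; exact hc (by simp)
  rw [e1, e2]
  have e3 : ∀ j ∈ Finset.Ico a b,
      (if j ∉ insert b σ ∧ j - 1 ∉ insert b σ then zn K m F j else 1)
        = (if j ∉ σ ∧ j - 1 ∉ σ then zn K m F j else 1) := by
    intro j hj
    rw [Finset.mem_Ico] at hj
    congr 1
    simp only [Finset.mem_insert, not_or, eq_iff_iff]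
    constructor
    · rintro ⟨⟨-, h1⟩, -, h2⟩; exact ⟨h1, h2⟩
    · rintro ⟨h1, h2⟩
      exact ⟨⟨by omega, h1⟩, by omega, h2⟩
  rw [Finset.prod_congr rfl e3, pow_succ]
  ring

lemma Dv_expand (a : ℕ) (ha : 1 ≤ a) :
    ∀ n, Dv K m F a n = ∑ σ ∈ Esets a (a + n - 1), w K m F σ a (a + n)
  | 0 => by
    rw [Esets_of_le (by omega)]
    simp only [Finset.sum_singleton, Dv, w]
    rw [show a + 0 = a from rfl]
    simp
  | 1 => by
    rw [show a + 1 - 1 = a by omega, Esets_of_le le_rfl]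
    simp only [Finset.sum_singleton, Dv, w]
    rw [Finset.prod_Ico_succ_top le_rfl]
    simp
  | 2 => by
    have hE : Esets a (a + 2 - 1) = {∅, {a}} := by
      rw [show a + 2 - 1 = a + 1 by omega]
      ext σ
      simp only [mem_Esets, Finset.mem_insert, Finset.mem_singleton]
      constructor
      · rintro ⟨h1, -⟩
        rcases Finset.eq_empty_or_nonempty σ with rfl | ⟨j, hj⟩
        · exact Or.inl rfl
        · right
          apply Finset.eq_singleton_iff_unique_mem.mpr
          have := h1 j hj
          have hja : j = a := by omega
          refine ⟨hja ▸ hj, fun x hx => ?_⟩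
          have := h1 x hx; omega
      · rintro (rfl | rfl) <;> simp
    rw [hE, Finset.sum_insert (by simp only [Finset.mem_singleton]; exact fun h => Finset.singleton_ne_empty a h.symm), Finset.sum_singleton]
    have h1 : w K m F ∅ a (a + 2) = zn K m F (a+1) * zn K m F a := by
      unfold w
      rw [Finset.prod_Ico_succ_top (by omega), Finset.prod_Ico_succ_top (by omega)]
      simp [mul_comm]
    have h2 : w K m F {a} a (a + 2) = - Fn K m F a := by
      have := w_insert K m F ∅ a a le_rfl (by simp)
      rw [show ({a} : Finset ℕ) = insert a ∅ from rfl, this]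
      simp [w]
    rw [h1, h2]
    simp only [Dv]
    ring
  | (n + 3) => by
    have hrec1 := Dv_expand a ha (n + 2)
    have hrec2 := Dv_expand a ha (n + 1)
    have h1 : Dv K m F a (n + 3)
        = zn K m F (a + n + 2) * Dv K m F a (n + 2) - Fn K m F (a + n + 1) * Dv K m F a (n + 1) := by
      show Dv K m F a ((n + 1) + 2) = _
      rw [Dv]
      ring_nf
    rw [h1, hrec1, hrec2,
      show a + (n + 2) - 1 = a + n + 1 by omega, show a + (n + 1) - 1 = a + n by omega,
      show a + (n + 3) - 1 = a + n + 2 by omega]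
    rw [show a + n + 2 = (a + n) + 2 by ring] at *
    rw [sum_split]
    have eA : ∀ σ ∈ Esets a (a + n + 1),
        w K m F σ a (a + (n + 3)) = zn K m F (a + n + 2) * w K m F σ a (a + (n + 2)) := by
      intro σ hσ
      have hb := (mem_Esets.mp hσ).1
      rw [show a + (n + 3) = (a + n + 1) + 2 by ring, show a + (n + 2) = (a + n + 1) + 1 by ring]
      exact w_top K m F σ a (a + n + 1) (by omega) (fun j hj => (hb j hj).2)
    have eB : ∀ σ ∈ Esets a (a + n),
        w K m F (insert (a + n + 1) σ) a (a + (n + 3))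
          = - (Fn K m F (a + n + 1) * w K m F σ a (a + (n + 1))) := by
      intro σ hσ
      have hb := (mem_Esets.mp hσ).1
      rw [show a + (n + 3) = (a + n + 1) + 2 by ring, show a + (n + 1) = a + n + 1 by ring]
      exact w_insert K m F σ a (a + n + 1) (by omega) (fun j hj => by have := (hb j hj).2; omega)
    rw [Finset.sum_congr rfl eA, Finset.sum_congr rfl eB, ← Finset.mul_sum,
      Finset.sum_neg_distrib, ← Finset.mul_sum]
    ring

/-! ### Cast lemmas -/

section CastLemmas

variable {m}

lemma cast_injOn (hm : 2 ≤ m) {i j : ℕ} (hi1 : 1 ≤ i) (hi2 : i ≤ m) (hj1 : 1 ≤ j)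
    (hj2 : j ≤ m) (h : (i : ZMod m) = j) : i = j := by
  have e : ((i - 1 : ℕ) : ZMod m) = ((j - 1 : ℕ) : ZMod m) := by
    rw [Nat.cast_sub hi1, Nat.cast_sub hj1, h]
  have v1 := ZMod.val_cast_of_lt (show i - 1 < m by omega)
  have v2 := ZMod.val_cast_of_lt (show j - 1 < m by omega)
  rw [e, v2] at v1
  omega

lemma mem_image_cast (hm : 2 ≤ m) {τ : Finset ℕ} (hτ : ∀ i ∈ τ, 1 ≤ i ∧ i ≤ m) {j : ℕ}
    (h1 : 1 ≤ j) (h2 : j ≤ m) :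
    (j : ZMod m) ∈ τ.image (Nat.cast : ℕ → ZMod m) ↔ j ∈ τ := by
  simp only [Finset.mem_image]
  constructor
  · rintro ⟨i, hi, hij⟩
    have := hτ i hi
    rwa [cast_injOn hm this.1 this.2 h1 h2 hij] at hi
  · exact fun hj => ⟨j, hj, rfl⟩

lemma cast_sub_one {j : ℕ} (h1 : 1 ≤ j) :
    ((j : ZMod m) - 1) = ((j - 1 : ℕ) : ZMod m) := by
  rw [Nat.cast_sub h1, Nat.cast_one]

lemma univ_eq_image (hm : 2 ≤ m) :
    (Finset.univ : Finset (ZMod m)) = (Finset.Ico 1 (m + 1)).image (Nat.cast : ℕ → ZMod m) := by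
  symm
  apply Finset.eq_univ_of_card
  rw [Finset.card_image_of_injOn, Nat.card_Ico]
  · simp [ZMod.card]
  · intro i hi j hj h
    rw [Finset.mem_coe, Finset.mem_Ico] at hi hj
    exact cast_injOn hm (by omega) (by omega) (by omega) (by omega) h

lemma card_image_cast (hm : 2 ≤ m) {τ : Finset ℕ} (hτ : ∀ i ∈ τ, 1 ≤ i ∧ i ≤ m) :
    (τ.image (Nat.cast : ℕ → ZMod m)).card = τ.card := by
  apply Finset.card_image_of_injOn
  intro i hi j hj h
  rw [Finset.mem_coe] at hi hj
  exact cast_injOn hm (hτ i hi).1 (hτ i hi).2 (hτ j hj).1 (hτ j hj).2 h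

end CastLemmas

variable {m} in
lemma prod_image_cast (hm : 2 ≤ m) {τ : Finset ℕ} (hτ : ∀ i ∈ τ, 1 ≤ i ∧ i ≤ m)
    (f : ZMod m → Lm K m) :
    ∏ x ∈ τ.image (Nat.cast : ℕ → ZMod m), f x = ∏ i ∈ τ, f (i : ZMod m) := by
  apply Finset.prod_image
  intro i hi j hj h
  exact cast_injOn hm (hτ i hi).1 (hτ i hi).2 (hτ j hj).1 (hτ j hj).2 h

variable {m} in
lemma prod_univ_filter (hm : 2 ≤ m) (p : ZMod m → Prop) [DecidablePred p] (f : ZMod m → Lm K m) :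
    ∏ j ∈ Finset.univ.filter p, f j
      = ∏ j ∈ Finset.Ico 1 (m + 1), (if p (j : ZMod m) then f (j : ZMod m) else 1) := by
  rw [Finset.prod_filter, univ_eq_image hm]
  rw [Finset.prod_image]
  intro i hi j hj h
  rw [Finset.mem_coe, Finset.mem_Ico] at hi hj
  exact cast_injOn hm (by omega) (by omega) (by omega) (by omega) h

/-- the weight on the `ZMod` side. -/
def g (σ : Finset (ZMod m)) : Lm K m :=
  (-1 : Lm K m) ^ σ.card *
    ((∏ j ∈ σ, Fc K m F j) *
      ∏ j' ∈ Finset.univ.filter (fun j => j ∉ σ ∧ j - 1 ∉ σ), zv K m F j')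

lemma g_image (hm : 2 ≤ m) (τ : Finset ℕ) (hτ : ∀ i ∈ τ, 1 ≤ i ∧ i ≤ m) :
    g K m F (τ.image (Nat.cast : ℕ → ZMod m))
      = (-1 : Lm K m) ^ τ.card * ((∏ i ∈ τ, Fn K m F i) *
          ∏ j ∈ Finset.Ico 1 (m + 1),
            (if j ∉ τ ∧ (j = 1 → m ∉ τ) ∧ (2 ≤ j → j - 1 ∉ τ) then zn K m F j else 1)) := by
  unfold g
  rw [card_image_cast hm hτ, prod_image_cast K hm hτ, prod_univ_filter K hm]
  congr 1
  congr 1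
  apply Finset.prod_congr rfl
  intro j hj
  rw [Finset.mem_Ico] at hj
  congr 1
  rw [eq_iff_iff]
  have hmem : ((j : ZMod m) ∈ τ.image (Nat.cast : ℕ → ZMod m)) ↔ j ∈ τ :=
    mem_image_cast hm hτ (by omega) (by omega)
  rcases eq_or_ne j 1 with rfl | hj1
  · have h0 : ((1 : ZMod m) - 1) = ((m : ℕ) : ZMod m) := by
      rw [ZMod.natCast_self]; ring
    rw [show ((1 : ℕ) : ZMod m) = (1 : ZMod m) from Nat.cast_one] at hmem ⊢
    rw [h0, mem_image_cast hm hτ (by omega) le_rfl]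
    constructor
    · rintro ⟨a, b⟩; exact ⟨hmem.not.mp a, fun _ => b, by omega⟩
    · rintro ⟨a, b, -⟩; exact ⟨hmem.not.mpr a, b rfl⟩
  · have h2j : 2 ≤ j := by omega
    rw [cast_sub_one (by omega)]
    rw [hmem, mem_image_cast hm hτ (show 1 ≤ j - 1 by omega) (show j - 1 ≤ m by omega)]
    constructor
    · rintro ⟨a, b⟩; exact ⟨a, fun h => absurd h hj1, fun _ => b⟩
    · rintro ⟨a, -, b⟩; exact ⟨a, b h2j⟩

/-- all independent subsets of `ZMod m`. -/
def Tall : Finset (Finset (ZMod m)) :=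
  Finset.univ.powerset.filter (fun σ => ∀ j ∈ σ, ∀ j' ∈ σ, j ≠ j' + 1)

lemma mem_Tall {σ : Finset (ZMod m)} :
    σ ∈ Tall m ↔ ∀ j ∈ σ, ∀ j' ∈ σ, j ≠ j' + 1 := by
  simp [Tall]

variable {m} in
lemma card_le_of_indep (hm : 2 ≤ m) {σ : Finset (ZMod m)}
    (h : ∀ j ∈ σ, ∀ j' ∈ σ, j ≠ j' + 1) : σ.card ≤ m / 2 := by
  have hcard : (σ.image (· + 1)).card = σ.card :=
    Finset.card_image_of_injOn (fun a _ b _ hab => by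
      simpa using hab)
  have hdisj : Disjoint σ (σ.image (· + 1)) := by
    rw [Finset.disjoint_left]
    intro x hx hx2
    obtain ⟨j', hj', hj2⟩ := Finset.mem_image.mp hx2
    exact h _ hx _ hj' hj2.symm
  have h1 := Finset.card_union_of_disjoint hdisj
  have h2 : (σ ∪ σ.image (· + 1)).card ≤ m := by
    have := Finset.card_le_univ (σ ∪ σ.image (· + 1))
    rwa [ZMod.card m] at this
  omega

variable {m} in
lemma indep_image_cast (hm : 2 ≤ m) {τ : Finset ℕ} (hτ : ∀ i ∈ τ, 1 ≤ i ∧ i ≤ m)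
    (h1 : ∀ i ∈ τ, ∀ i' ∈ τ, i ≠ i' + 1) (h2 : ¬(1 ∈ τ ∧ m ∈ τ)) :
    ∀ x ∈ τ.image (Nat.cast : ℕ → ZMod m), ∀ x' ∈ τ.image (Nat.cast : ℕ → ZMod m),
      x ≠ x' + 1 := by
  intro x hx x' hx' heq
  obtain ⟨i, hi, rfl⟩ := Finset.mem_image.mp hx
  obtain ⟨i', hi', rfl⟩ := Finset.mem_image.mp hx'
  by_cases hm' : i' = m
  · rw [hm'] at heq hi'
    have : (i : ZMod m) = ((1 : ℕ) : ZMod m) := by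
      rw [heq, ZMod.natCast_self, Nat.cast_one, zero_add]
    have hi1 := cast_injOn hm (hτ i hi).1 (hτ i hi).2 (by omega) (by omega) this
    exact h2 ⟨hi1 ▸ hi, hi'⟩
  · have hlt : i' + 1 ≤ m := by have := hτ i' hi'; omega
    have : (i : ZMod m) = ((i' + 1 : ℕ) : ZMod m) := by
      rw [heq]; push_cast; ring
    have := cast_injOn hm (hτ i hi).1 (hτ i hi).2 (by omega) hlt this
    exact h1 i hi i' hi' this

variable {m} in
lemma psi_mem_Esets {σ : Finset (ZMod m)} (hσ : ∀ j ∈ σ, ∀ j' ∈ σ, j ≠ j' + 1) (a b : ℕ) :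
    (Finset.Ico a b).filter (fun n : ℕ => (n : ZMod m) ∈ σ) ∈ Esets a b := by
  rw [mem_Esets]
  constructor
  · intro j hj
    simp only [Finset.mem_filter, Finset.mem_Ico] at hj
    omega
  · intro j hj hj1
    simp only [Finset.mem_filter, Finset.mem_Ico] at hj hj1
    apply hσ _ hj1.2 _ hj.2
    push_cast
    ring

variable {m} in
lemma mem_cast_image {σ : Finset (ZMod m)} (hσ0 : (0 : ZMod m) ∉ σ) : True := trivial

lemma sum_case1 (hm : 2 ≤ m) :
    ∑ σ ∈ (Tall m).filter (fun σ => ¬(0 : ZMod m) ∈ σ ∧ ¬(1 : ZMod m) ∈ σ), g K m F σ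
      = ∑ σ ∈ Esets 2 m, zn K m F 1 * w K m F σ 2 (m + 1) := by
  symm
  refine Finset.sum_bij' (fun τ _ => τ.image (Nat.cast : ℕ → ZMod m))
    (fun σ _ => (Finset.Ico 2 m).filter (fun n : ℕ => (n : ZMod m) ∈ σ))
    ?_ ?_ ?_ ?_ ?_
  -- hi : image is in the filtered Tall
  · intro τ hτ
    have hb := (mem_Esets.mp hτ).1
    have hind := (mem_Esets.mp hτ).2
    have hbd : ∀ i ∈ τ, 1 ≤ i ∧ i ≤ m := fun i hi => by have := hb i hi; omega
    simp only [Finset.mem_filter]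
    refine ⟨(mem_Tall m).mpr ?_, ?_, ?_⟩
    · apply indep_image_cast hm hbd
      · intro i hi i' hi' hii
        exact hind i' hi' (hii ▸ hi)
      · rintro ⟨h1, -⟩
        have := hb 1 h1; omega
    · rw [show (0 : ZMod m) = ((m : ℕ) : ZMod m) from (ZMod.natCast_self m).symm,
        mem_image_cast hm hbd (by omega) le_rfl]
      intro hc; have := hb m hc; omega
    · rw [show (1 : ZMod m) = ((1 : ℕ) : ZMod m) from (Nat.cast_one).symm,
        mem_image_cast hm hbd (by omega) (by omega)]
      intro hc; have := hb 1 hc; omega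
  -- hj : preimage is in Esets
  · intro σ hσ
    exact psi_mem_Esets ((mem_Tall m).mp (Finset.mem_filter.mp hσ).1) 2 m
  -- left inverse
  · intro τ hτ
    have hb := (mem_Esets.mp hτ).1
    have hbd : ∀ i ∈ τ, 1 ≤ i ∧ i ≤ m := fun i hi => by have := hb i hi; omega
    ext j
    simp only [Finset.mem_filter, Finset.mem_Ico]
    constructor
    · rintro ⟨hj, hj2⟩
      rwa [mem_image_cast hm hbd (by omega) (by omega)] at hj2
    · intro hj
      have := hb j hj
      exact ⟨by omega, (mem_image_cast hm hbd (by omega) (by omega)).mpr hj⟩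
  -- right inverse
  · intro σ hσ
    rw [Finset.mem_filter] at hσ
    obtain ⟨hT, hσ0, hσ1⟩ := hσ
    ext x
    simp only [Finset.mem_image, Finset.mem_filter, Finset.mem_Ico]
    constructor
    · rintro ⟨i, ⟨-, hi⟩, rfl⟩
      exact hi
    · intro hx
      refine ⟨(ZMod.val x), ⟨⟨?_, ZMod.val_lt x⟩, ?_⟩, ZMod.natCast_rightInverse x⟩
      · rcases Nat.lt_or_ge (ZMod.val x) 2 with h | h
        · exfalso
          interval_cases h' : (ZMod.val x)
          · exact hσ0 (by rwa [← (ZMod.natCast_rightInverse x), h', Nat.cast_zero] at hx)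
          · exact hσ1 (by rwa [← (ZMod.natCast_rightInverse x), h', Nat.cast_one] at hx)
        · exact h
      · rwa [ZMod.natCast_rightInverse x]
  -- values
  · intro τ hτ
    have hb := (mem_Esets.mp hτ).1
    have hbd : ∀ i ∈ τ, 1 ≤ i ∧ i ≤ m := fun i hi => by have := hb i hi; omega
    rw [g_image K m F hm τ hbd]
    have hsplit : ∏ j ∈ Finset.Ico 1 (m + 1),
        (if j ∉ τ ∧ (j = 1 → m ∉ τ) ∧ (2 ≤ j → j - 1 ∉ τ) then zn K m F j else 1)
        = zn K m F 1 * ∏ j ∈ Finset.Ico 2 (m + 1),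
            (if j ∉ τ ∧ j - 1 ∉ τ then zn K m F j else 1) := by
      rw [Finset.prod_eq_prod_Ico_succ_bot (by omega : 1 < m + 1)]
      congr 1
      · rw [if_pos]
        refine ⟨fun hc => by have := hb 1 hc; omega, fun _ => fun hc => by have := hb m hc; omega,
          by omega⟩
      · apply Finset.prod_congr rfl
        intro j hj
        rw [Finset.mem_Ico] at hj
        congr 1
        rw [eq_iff_iff]
        constructor
        · rintro ⟨a, -, b⟩; exact ⟨a, b (by omega)⟩
        · rintro ⟨a, b⟩; exact ⟨a, by omega, fun _ => b⟩
    rw [hsplit]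
    unfold w
    ring

lemma sum_case2 (hm : 2 ≤ m) :
    ∑ σ ∈ (Tall m).filter (fun σ => (0 : ZMod m) ∈ σ), g K m F σ
      = ∑ σ ∈ Esets 2 (m - 1), -(Fn K m F m * w K m F σ 2 m) := by
  symm
  refine Finset.sum_bij' (fun τ _ => (insert m τ).image (Nat.cast : ℕ → ZMod m))
    (fun σ _ => (Finset.Ico 2 (m - 1)).filter (fun n : ℕ => (n : ZMod m) ∈ σ))
    ?_ ?_ ?_ ?_ ?_
  · intro τ hτ
    have hb := (mem_Esets.mp hτ).1
    have hind := (mem_Esets.mp hτ).2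
    have hbd : ∀ i ∈ insert m τ, 1 ≤ i ∧ i ≤ m := by
      intro i hi
      rcases Finset.mem_insert.mp hi with rfl | hi
      · omega
      · have := hb i hi; omega
    simp only [Finset.mem_filter]
    constructor
    · apply (mem_Tall m).mpr
      apply indep_image_cast hm hbd
      · intro i hi i' hi' hii
        rcases Finset.mem_insert.mp hi' with h1 | h1
        · have h2 := hbd i hi; omega
        · have h3 := hb i' h1
          rcases Finset.mem_insert.mp hi with h4 | h4
          · omega
          · exact hind i' h1 (hii ▸ h4)
      · rintro ⟨h1, -⟩
        rcases Finset.mem_insert.mp h1 with h | h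
        · omega
        · have := hb 1 h; omega
    · rw [show (0 : ZMod m) = ((m : ℕ) : ZMod m) from (ZMod.natCast_self m).symm,
        mem_image_cast hm hbd (by omega) le_rfl]
      exact Finset.mem_insert_self _ _
  · intro σ hσ
    exact psi_mem_Esets ((mem_Tall m).mp (Finset.mem_filter.mp hσ).1) 2 (m - 1)
  · intro τ hτ
    have hb := (mem_Esets.mp hτ).1
    have hbd : ∀ i ∈ insert m τ, 1 ≤ i ∧ i ≤ m := by
      intro i hi
      rcases Finset.mem_insert.mp hi with rfl | hi
      · omega
      · have := hb i hi; omega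
    ext j
    simp only [Finset.mem_filter, Finset.mem_Ico]
    constructor
    · rintro ⟨hj, hj2⟩
      rw [mem_image_cast hm hbd (by omega) (by omega)] at hj2
      rcases Finset.mem_insert.mp hj2 with rfl | h
      · omega
      · exact h
    · intro hj
      have := hb j hj
      exact ⟨by omega,
        (mem_image_cast hm hbd (by omega) (by omega)).mpr (Finset.mem_insert_of_mem hj)⟩
  · intro σ hσ
    rw [Finset.mem_filter] at hσ
    obtain ⟨hT', hσ0⟩ := hσ
    have hT := (mem_Tall m).mp hT'
    ext x
    simp only [Finset.mem_image, Finset.mem_insert, Finset.mem_filter, Finset.mem_Ico]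
    constructor
    · rintro ⟨i, hi, rfl⟩
      rcases hi with rfl | ⟨-, hi⟩
      · rwa [ZMod.natCast_self]
      · exact hi
    · intro hx
      have hjlt : ZMod.val x < m := ZMod.val_lt x
      have hxj : ((ZMod.val x : ℕ) : ZMod m) = x := ZMod.natCast_rightInverse x
      by_cases hj0 : ZMod.val x = 0
      · refine ⟨m, Or.inl rfl, ?_⟩
        rw [ZMod.natCast_self, ← hxj, hj0, Nat.cast_zero]
      · have hj1 : ZMod.val x ≠ 1 := by
          intro h1
          apply hT x hx 0 hσ0
          rw [← hxj, h1, Nat.cast_one, zero_add]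
        have hjm : ZMod.val x ≠ m - 1 := by
          intro h1
          apply hT 0 hσ0 x hx
          rw [← hxj, h1,
            show ((m - 1 : ℕ) : ZMod m) + 1 = ((m : ℕ) : ZMod m) by
              rw [Nat.cast_sub (show 1 ≤ m by omega)]; push_cast; ring,
            ZMod.natCast_self]
        exact ⟨ZMod.val x, Or.inr ⟨⟨by omega, by omega⟩, by rw [hxj]; exact hx⟩, hxj⟩
  · intro τ hτ
    have hb := (mem_Esets.mp hτ).1
    have hbd : ∀ i ∈ insert m τ, 1 ≤ i ∧ i ≤ m := by
      intro i hi
      rcases Finset.mem_insert.mp hi with rfl | hi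
      · omega
      · have := hb i hi; omega
    have hmτ : m ∉ τ := fun hc => by have := hb m hc; omega
    rw [g_image K m F hm (insert m τ) hbd,
      Finset.card_insert_of_notMem hmτ, Finset.prod_insert hmτ]
    have hsplit : ∏ j ∈ Finset.Ico 1 (m + 1),
        (if j ∉ insert m τ ∧ (j = 1 → m ∉ insert m τ) ∧ (2 ≤ j → j - 1 ∉ insert m τ)
          then zn K m F j else 1)
        = ∏ j ∈ Finset.Ico 2 m, (if j ∉ τ ∧ j - 1 ∉ τ then zn K m F j else 1) := by
      rw [Finset.prod_eq_prod_Ico_succ_bot (by omega : 1 < m + 1),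
        Finset.prod_Ico_succ_top (by omega : 2 ≤ m),
        if_neg (by rintro ⟨-, hc, -⟩; exact hc rfl (Finset.mem_insert_self _ _)),
        if_neg (by rintro ⟨hc, -⟩; exact hc (Finset.mem_insert_self _ _)),
        one_mul, mul_one]
      apply Finset.prod_congr rfl
      intro j hj
      rw [Finset.mem_Ico] at hj
      congr 1
      rw [eq_iff_iff]
      simp only [Finset.mem_insert, not_or]
      constructor
      · rintro ⟨⟨-, a⟩, -, c⟩
        exact ⟨a, (c (by omega)).2⟩
      · rintro ⟨a, b⟩
        exact ⟨⟨by omega, a⟩, fun h => by omega, fun _ => ⟨by omega, b⟩⟩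
    rw [hsplit]
    unfold w
    rw [pow_succ]
    ring

lemma sum_case3 (hm : 2 ≤ m) :
    ∑ σ ∈ (Tall m).filter (fun σ => ¬(0 : ZMod m) ∈ σ ∧ (1 : ZMod m) ∈ σ), g K m F σ
      = ∑ σ ∈ Esets 3 m, -(Fn K m F 1 * w K m F σ 3 (m + 1)) := by
  symm
  refine Finset.sum_bij' (fun τ _ => (insert 1 τ).image (Nat.cast : ℕ → ZMod m))
    (fun σ _ => (Finset.Ico 3 m).filter (fun n : ℕ => (n : ZMod m) ∈ σ))
    ?_ ?_ ?_ ?_ ?_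
  · intro τ hτ
    have hb := (mem_Esets.mp hτ).1
    have hind := (mem_Esets.mp hτ).2
    have hbd : ∀ i ∈ insert 1 τ, 1 ≤ i ∧ i ≤ m := by
      intro i hi
      rcases Finset.mem_insert.mp hi with rfl | hi
      · omega
      · have := hb i hi; omega
    simp only [Finset.mem_filter]
    refine ⟨(mem_Tall m).mpr ?_, ?_, ?_⟩
    · apply indep_image_cast hm hbd
      · intro i hi i' hi' hii
        rcases Finset.mem_insert.mp hi' with h1 | h1
        · rcases Finset.mem_insert.mp hi with h4 | h4
          · omega
          · have := hb i h4; omega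
        · have h3 := hb i' h1
          rcases Finset.mem_insert.mp hi with h4 | h4
          · omega
          · exact hind i' h1 (hii ▸ h4)
      · rintro ⟨-, hmm⟩
        rcases Finset.mem_insert.mp hmm with h | h
        · omega
        · have := hb m h; omega
    · rw [show (0 : ZMod m) = ((m : ℕ) : ZMod m) from (ZMod.natCast_self m).symm,
        mem_image_cast hm hbd (by omega) le_rfl]
      intro hc
      rcases Finset.mem_insert.mp hc with h | h
      · omega
      · have := hb m h; omega
    · rw [show (1 : ZMod m) = ((1 : ℕ) : ZMod m) from (Nat.cast_one).symm,
        mem_image_cast hm hbd (by omega) (by omega)]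
      exact Finset.mem_insert_self _ _
  · intro σ hσ
    exact psi_mem_Esets ((mem_Tall m).mp (Finset.mem_filter.mp hσ).1) 3 m
  · intro τ hτ
    have hb := (mem_Esets.mp hτ).1
    have hbd : ∀ i ∈ insert 1 τ, 1 ≤ i ∧ i ≤ m := by
      intro i hi
      rcases Finset.mem_insert.mp hi with rfl | hi
      · omega
      · have := hb i hi; omega
    ext j
    simp only [Finset.mem_filter, Finset.mem_Ico]
    constructor
    · rintro ⟨hj, hj2⟩
      rw [mem_image_cast hm hbd (by omega) (by omega)] at hj2
      rcases Finset.mem_insert.mp hj2 with rfl | h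
      · omega
      · exact h
    · intro hj
      have := hb j hj
      exact ⟨by omega,
        (mem_image_cast hm hbd (by omega) (by omega)).mpr (Finset.mem_insert_of_mem hj)⟩
  · intro σ hσ
    rw [Finset.mem_filter] at hσ
    obtain ⟨hT', hσ0, hσ1⟩ := hσ
    have hT := (mem_Tall m).mp hT'
    ext x
    simp only [Finset.mem_image, Finset.mem_insert, Finset.mem_filter, Finset.mem_Ico]
    constructor
    · rintro ⟨i, hi, rfl⟩
      rcases hi with rfl | ⟨-, hi⟩
      · rwa [Nat.cast_one]
      · exact hi
    · intro hx
      have hjlt : ZMod.val x < m := ZMod.val_lt x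
      have hxj : ((ZMod.val x : ℕ) : ZMod m) = x := ZMod.natCast_rightInverse x
      have hj0 : ZMod.val x ≠ 0 := by
        intro h0
        apply hσ0
        rwa [← hxj, h0, Nat.cast_zero] at hx
      by_cases hj1 : ZMod.val x = 1
      · refine ⟨1, Or.inl rfl, ?_⟩
        rw [← hxj, hj1]
      · have hj2 : ZMod.val x ≠ 2 := by
          intro h2
          apply hT x hx 1 hσ1
          rw [← hxj, h2]
          rw [show ((2 : ℕ) : ZMod m) = (1 : ZMod m) + 1 by push_cast; ring]
        exact ⟨ZMod.val x, Or.inr ⟨⟨by omega, by omega⟩, by rw [hxj]; exact hx⟩, hxj⟩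
  · intro τ hτ
    have hb := (mem_Esets.mp hτ).1
    have hbd : ∀ i ∈ insert 1 τ, 1 ≤ i ∧ i ≤ m := by
      intro i hi
      rcases Finset.mem_insert.mp hi with rfl | hi
      · omega
      · have := hb i hi; omega
    have h1τ : (1 : ℕ) ∉ τ := fun hc => by have := hb 1 hc; omega
    rw [g_image K m F hm (insert 1 τ) hbd,
      Finset.card_insert_of_notMem h1τ, Finset.prod_insert h1τ]
    have hsplit : ∏ j ∈ Finset.Ico 1 (m + 1),
        (if j ∉ insert 1 τ ∧ (j = 1 → m ∉ insert 1 τ) ∧ (2 ≤ j → j - 1 ∉ insert 1 τ)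
          then zn K m F j else 1)
        = ∏ j ∈ Finset.Ico 3 (m + 1), (if j ∉ τ ∧ j - 1 ∉ τ then zn K m F j else 1) := by
      rw [Finset.prod_eq_prod_Ico_succ_bot (by omega : 1 < m + 1),
        Finset.prod_eq_prod_Ico_succ_bot (by omega : 2 < m + 1),
        if_neg (by rintro ⟨hc, -⟩; exact hc (Finset.mem_insert_self _ _)),
        if_neg (by
          rintro ⟨-, -, hc⟩
          exact hc (by omega) (by norm_num : 2 - 1 ∈ insert 1 τ)),
        one_mul, one_mul]
      apply Finset.prod_congr rfl
      intro j hj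
      rw [Finset.mem_Ico] at hj
      congr 1
      rw [eq_iff_iff]
      simp only [Finset.mem_insert, not_or]
      constructor
      · rintro ⟨⟨-, a⟩, -, c⟩
        exact ⟨a, (c (by omega)).2⟩
      · rintro ⟨a, b⟩
        exact ⟨⟨by omega, a⟩, fun h => by omega, fun _ => ⟨by omega, b⟩⟩
    rw [hsplit]
    unfold w
    rw [pow_succ]
    ring

lemma Cv_eq : ∀ k, Cv K m F (k + 1) = Dv K m F 2 k
  | 0 => rfl
  | 1 => rfl
  | (k + 2) => by
      have h1 := Cv_eq (k + 1)
      have h2 := Cv_eq k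
      show Cv K m F (k + 3) = Dv K m F 2 (k + 2)
      rw [show Dv K m F 2 (k + 2)
          = zn K m F (2 + k + 1) * Dv K m F 2 (k + 1) - Fn K m F (2 + k) * Dv K m F 2 k from rfl]
      rw [← h1, ← h2, show 2 + k + 1 = k + 3 by omega, show 2 + k = k + 2 by omega]
      rfl

lemma Cpv_eq : ∀ k, Cpv K m F (k + 1) = Dv K m F 3 k
  | 0 => rfl
  | 1 => rfl
  | (k + 2) => by
      have h1 := Cpv_eq (k + 1)
      have h2 := Cpv_eq k
      show Cpv K m F (k + 3) = Dv K m F 3 (k + 2)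
      rw [show Dv K m F 3 (k + 2)
          = zn K m F (3 + k + 1) * Dv K m F 3 (k + 1) - Fn K m F (3 + k) * Dv K m F 3 k from rfl]
      rw [← h1, ← h2, show 3 + k + 1 = k + 4 by omega, show 3 + k = k + 3 by omega]
      rfl

lemma Cv_eq' (k : ℕ) (hk : 1 ≤ k) : Cv K m F k = Dv K m F 2 (k - 1) := by
  obtain ⟨k', rfl⟩ : ∃ k', k = k' + 1 := ⟨k - 1, by omega⟩
  rw [Nat.add_sub_cancel]
  exact Cv_eq K m F k'

lemma Cpv_eq' (k : ℕ) (hk : 1 ≤ k) : Cpv K m F k = Dv K m F 3 (k - 1) := by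
  obtain ⟨k', rfl⟩ : ∃ k', k = k' + 1 := ⟨k - 1, by omega⟩
  rw [Nat.add_sub_cancel]
  exact Cpv_eq K m F k'

lemma Tsets_eq (p : ℕ) : Tsets m p = (Tall m).filter (fun σ => σ.card = p) := by
  ext σ
  simp only [Tsets, Tall, Finset.mem_filter, Finset.mem_powerset]
  tauto

end S19

/-- `A^{(m)} = ∑_{p=0}^{⌊m/2⌋} (-1)^p T_p^{(m)}` in `L`. -/
theorem stmt_19 (hm : 2 ≤ m) (hF : ∀ n, F n ≠ 0) :
    Av K m F = ∑ p ∈ Finset.range (m / 2 + 1), (-1 : Lm K m) ^ p * Tv K m F p := by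
  have hR : ∑ p ∈ Finset.range (m / 2 + 1), (-1 : Lm K m) ^ p * Tv K m F p
      = ∑ σ ∈ S19.Tall m, S19.g K m F σ := by
    have h1 : ∀ p ∈ Finset.range (m / 2 + 1),
        (-1 : Lm K m) ^ p * Tv K m F p
          = ∑ σ ∈ Finset.filter (fun σ => σ.card = p) (S19.Tall m), S19.g K m F σ := by
      intro p _
      rw [Tv, Finset.mul_sum, S19.Tsets_eq]
      apply Finset.sum_congr rfl
      intro σ hσ
      have hc : σ.card = p := (Finset.mem_filter.mp hσ).2
      rw [S19.g, hc]
    rw [Finset.sum_congr rfl h1]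
    apply Finset.sum_fiberwise_of_maps_to
    intro σ hσ
    rw [Finset.mem_range]
    have := S19.card_le_of_indep hm ((S19.mem_Tall m).mp hσ)
    omega
  rw [hR]
  rw [← Finset.sum_filter_add_sum_filter_not (S19.Tall m)
    (fun σ => (0 : ZMod m) ∈ σ) (S19.g K m F)]
  rw [← Finset.sum_filter_add_sum_filter_not
    ((S19.Tall m).filter (fun σ => ¬(0 : ZMod m) ∈ σ))
    (fun σ => (1 : ZMod m) ∈ σ) (S19.g K m F)]
  rw [Finset.filter_filter, Finset.filter_filter]
  rw [S19.sum_case2 K m F hm, S19.sum_case3 K m F hm, S19.sum_case1 K m F hm]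
  rw [Av, S19.Cv_eq' K m F m (by omega), S19.Cv_eq' K m F (m - 1) (by omega),
    S19.Cpv_eq' K m F (m - 1) (by omega), show m - 1 - 1 = m - 2 by omega]
  have e1 := S19.Dv_expand K m F 2 (by omega) (m - 1)
  rw [show 2 + (m - 1) - 1 = m by omega, show 2 + (m - 1) = m + 1 by omega] at e1
  have e2 := S19.Dv_expand K m F 2 (by omega) (m - 2)
  rw [show 2 + (m - 2) - 1 = m - 1 by omega, show 2 + (m - 2) = m by omega] at e2
  have e3 := S19.Dv_expand K m F 3 (by omega) (m - 2)
  rw [show 3 + (m - 2) - 1 = m by omega, show 3 + (m - 2) = m + 1 by omega] at e3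
  rw [e1, e2, e3]
  simp only [S19.zn, S19.Fn, Finset.mul_sum, Finset.sum_neg_distrib]
  ring

end
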